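/- Let Σ be a finite set of matrices in T^{n×n}, each with ρ(A) = 0, set M = ⋁_{A∈Σ} A (entrywise max), and assume ρ(M) = 0 and that u ∈ ℝ^n is a visualization of M (M⊙u ≤ u). If in addition every A ∈ Σ has ultimate rank n (all nodes of G(A) critical), then u is a common eigenvector: A⊙u = u for every A ∈ Σ, and moreover P⊙u = u and ρ(P) = 0 for every product P of matrices of Σ. -/

import Mathlib

/-- The max-plus (tropical) semiring `T = ℝ ∪ {-∞}`. -/
abbrev T : Type := WithBot ℝ

/-- Tropical matrix product. -/
noncomputable def tmul {n m k : ℕ} (A : Fin n → Fin m → T) (B : Fin m → Fin k → T) :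
    Fin n → Fin k → T :=
  fun i j => Finset.univ.sup fun l => A i l + B l j

/-- Tropical matrix-vector product. -/
noncomputable def tmulVec {n m : ℕ} (A : Fin n → Fin m → T) (u : Fin m → T) : Fin n → T :=
  fun i => Finset.univ.sup fun j => A i j + u j

/-- Tropical identity matrix. -/
noncomputable def tId (n : ℕ) : Fin n → Fin n → T :=
  fun i j => if i = j then (0 : T) else ⊥

/-- Tropical matrix powers. -/
noncomputable def tpow {n : ℕ} (A : Fin n → Fin n → T) : ℕ → (Fin n → Fin n → T)
  | 0 => tId n
  | (m + 1) => tmul (tpow A m) A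

/-- Tropical product of a list of matrices (empty product = identity). -/
noncomputable def tProd {n : ℕ} : List (Fin n → Fin n → T) → (Fin n → Fin n → T)
  | [] => tId n
  | (M :: L) => tmul M (tProd L)

/-- Weight of a permutation. -/
noncomputable def wt {n : ℕ} (A : Fin n → Fin n → T) (σ : Equiv.Perm (Fin n)) : T :=
  ∑ i, A i (σ i)

/-- Tropical permanent. -/
noncomputable def per {n : ℕ} (A : Fin n → Fin n → T) : T :=
  Finset.univ.sup fun σ : Equiv.Perm (Fin n) => wt A σ

/-- Tropical non-singularity: finite permanent attained by a unique permutation. -/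
def NonSingular {n : ℕ} (A : Fin n → Fin n → T) : Prop :=
  per A ≠ ⊥ ∧ ∃! σ : Equiv.Perm (Fin n), wt A σ = per A

/-- Weight of the circuit `c 0 → c 1 → ⋯ → c ℓ → c 0` (length `ℓ+1`). -/
noncomputable def cwt {n ℓ : ℕ} (A : Fin n → Fin n → T) (c : Fin (ℓ + 1) → Fin n) : T :=
  ∑ k : Fin (ℓ + 1), A (c k) (c (k + 1))

/-- `ρ(A) = r`: some circuit has mean weight `r`, and every circuit has mean weight `≤ r`. -/
def RhoEq {n : ℕ} (A : Fin n → Fin n → T) (r : ℝ) : Prop :=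
  (∃ ℓ, ∃ c : Fin (ℓ + 1) → Fin n, cwt A c = ((((ℓ : ℝ) + 1) * r : ℝ) : T)) ∧
  ∀ ℓ, ∀ c : Fin (ℓ + 1) → Fin n, cwt A c ≤ ((((ℓ : ℝ) + 1) * r : ℝ) : T)

/-- `(i,j)` is an arc of the critical graph (lies on a circuit of mean weight `r = ρ(A)`). -/
def CritArc {n : ℕ} (A : Fin n → Fin n → T) (r : ℝ) (i j : Fin n) : Prop :=
  ∃ ℓ, ∃ c : Fin (ℓ + 1) → Fin n, cwt A c = ((((ℓ : ℝ) + 1) * r : ℝ) : T) ∧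
    ∃ k : Fin (ℓ + 1), c k = i ∧ c (k + 1) = j

/-- `i` is a node of the critical graph. -/
def CritNode {n : ℕ} (A : Fin n → Fin n → T) (r : ℝ) (i : Fin n) : Prop :=
  ∃ ℓ, ∃ c : Fin (ℓ + 1) → Fin n, cwt A c = ((((ℓ : ℝ) + 1) * r : ℝ) : T) ∧
    ∃ k : Fin (ℓ + 1), c k = i

/-- Reachability in the critical graph. -/
def CritReach {n : ℕ} (A : Fin n → Fin n → T) (r : ℝ) : Fin n → Fin n → Prop :=
  Relation.ReflTransGen (fun i j => CritArc A r i j)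

/-- Same strongly connected component of the critical graph. -/
def SameScc {n : ℕ} (A : Fin n → Fin n → T) (r : ℝ) (i j : Fin n) : Prop :=
  CritReach A r i j ∧ CritReach A r j i

/-- `R` is a set of representatives, one per scc of the critical graph. -/
def SccReps {n : ℕ} (A : Fin n → Fin n → T) (r : ℝ) (R : Finset (Fin n)) : Prop :=
  (∀ i ∈ R, CritNode A r i) ∧
  (∀ i ∈ R, ∀ j ∈ R, i ≠ j → ¬ SameScc A r i j) ∧
  (∀ j, CritNode A r j → ∃ i ∈ R, SameScc A r i j)

/-- Cyclicity of the scc of the critical graph containing `i`: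
the gcd (greatest common divisor) of the lengths of the critical circuits through `i`. -/
noncomputable def cycAt {n : ℕ} (A : Fin n → Fin n → T) (r : ℝ) (i : Fin n) : ℕ :=
  sSup {d : ℕ | ∀ ℓ : ℕ,
    (∃ c : Fin (ℓ + 1) → Fin n, cwt A c = ((((ℓ : ℝ) + 1) * r : ℝ) : T) ∧ c 0 = i) →
    d ∣ (ℓ + 1)}

/-- `A` has an `r × r` tropically non-singular submatrix. -/
def HasNSsub {n m : ℕ} (A : Fin n → Fin m → T) (r : ℕ) : Prop :=
  ∃ f : Fin r → Fin n, ∃ g : Fin r → Fin m,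
    Function.Injective f ∧ Function.Injective g ∧
    NonSingular (fun i j => A (f i) (g j))

/-- Tropical rank: maximal size of a tropically non-singular square submatrix. -/
noncomputable def trrk {n m : ℕ} (A : Fin n → Fin m → T) : ℕ :=
  sSup {r : ℕ | HasNSsub A r}

/-- Tropical convex hull (span) of a finite family of vectors of `T^n`. -/
def tSpan {n m : ℕ} (v : Fin m → (Fin n → T)) : Set (Fin n → T) :=
  { w | ∃ α : Fin m → T, w = fun i => Finset.univ.sup fun j => α j + v j i }

/-- Weak dimension of a tropically convex set: minimal size of a generating family. -/
noncomputable def weakDim {n : ℕ} (X : Set (Fin n → T)) : ℕ :=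
  sInf {k : ℕ | ∃ v : Fin k → (Fin n → T), tSpan v = X}

/-- Column rank: weak dimension of the tropical convex hull of the columns. -/
noncomputable def colrk {n m : ℕ} (A : Fin n → Fin m → T) : ℕ :=
  weakDim (tSpan fun j => fun i => A i j)

/-- Row rank: weak dimension of the tropical convex hull of the rows. -/
noncomputable def rowrk {n m : ℕ} (A : Fin n → Fin m → T) : ℕ :=
  weakDim (tSpan fun i => fun j => A i j)


lemma coe_sum_T {N : ℕ} (g : Fin N → ℝ) : (∑ k, ((g k : ℝ) : T)) = ((∑ k, g k : ℝ) : T) := by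
  push_cast; rfl

lemma sum_eq_bot_T {N : ℕ} {f : Fin N → T} (k : Fin N) (hk : f k = ⊥) : ∑ j, f j = ⊥ := by
  rw [← Finset.add_sum_erase _ f (Finset.mem_univ k), hk]
  exact WithBot.bot_add _

lemma sum_ne_bot_T {N : ℕ} {f : Fin N → T} (h : ∑ k, f k ≠ ⊥) (k : Fin N) : f k ≠ ⊥ :=
  fun hk => h (sum_eq_bot_T k hk)

lemma lift_reals_T {N : ℕ} {f : Fin N → T} (h : ∀ k, f k ≠ ⊥) :
    ∃ g : Fin N → ℝ, ∀ k, f k = ((g k : ℝ) : T) := by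
  choose g hg using fun k => WithBot.ne_bot_iff_exists.mp (h k)
  exact ⟨g, fun k => (hg k).symm⟩

lemma tele_T {ℓ : ℕ} (v : Fin (ℓ + 1) → ℝ) : ∑ k, v (k + 1) = ∑ k, v k :=
  Fintype.sum_equiv (Equiv.addRight 1) _ _ (fun _ => rfl)

lemma solveT {a : T} {b c : ℝ} (h : a + ((b : ℝ) : T) = ((c : ℝ) : T)) :
    a = ((c - b : ℝ) : T) := by
  have hnb : a ≠ ⊥ := by
    intro hb
    rw [hb, WithBot.bot_add] at h
    exact WithBot.bot_ne_coe h
  obtain ⟨r, hr⟩ := WithBot.ne_bot_iff_exists.mp hnb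
  rw [← hr, ← WithBot.coe_add, WithBot.coe_eq_coe] at h
  rw [← hr, WithBot.coe_eq_coe]
  linarith

lemma arc_eq_T {n : ℕ} (B : Fin n → Fin n → T) (u : Fin n → ℝ)
    (hle : ∀ i j, B i j + ((u j : ℝ) : T) ≤ ((u i : ℝ) : T))
    {p q : Fin n} (h : CritArc B 0 p q) :
    B p q + ((u q : ℝ) : T) = ((u p : ℝ) : T) := by
  obtain ⟨ℓ, c, hc, k₀, hk0, hk1⟩ := h
  have hc0 : cwt B c = ((0 : ℝ) : T) := by rw [hc]; norm_num
  have hnb : ∀ k : Fin (ℓ + 1), B (c k) (c (k + 1)) ≠ ⊥ := by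
    have hsne : (∑ k : Fin (ℓ + 1), B (c k) (c (k + 1))) ≠ ⊥ := by
      rw [show (∑ k : Fin (ℓ + 1), B (c k) (c (k + 1))) = cwt B c from rfl, hc0]
      exact WithBot.coe_ne_bot
    exact sum_ne_bot_T hsne
  obtain ⟨a, ha⟩ := lift_reals_T hnb
  have hsum : ∑ k, a k = 0 := by
    have h1 : cwt B c = ((∑ k, a k : ℝ) : T) := by
      rw [show cwt B c = ∑ k : Fin (ℓ + 1), B (c k) (c (k + 1)) from rfl]
      simp only [ha]
      exact coe_sum_T a
    rw [hc0] at h1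
    exact (WithBot.coe_eq_coe.mp h1.symm)
  have hptw : ∀ k : Fin (ℓ + 1), a k + u (c (k + 1)) ≤ u (c k) := by
    intro k
    have := hle (c k) (c (k + 1))
    rw [ha k] at this
    exact_mod_cast this
  have heq : ∀ k ∈ Finset.univ, a k + u (c (k + 1)) = u (c k) := by
    apply (Finset.sum_eq_sum_iff_of_le (fun k _ => hptw k)).mp
    rw [Finset.sum_add_distrib, hsum, zero_add]
    exact tele_T (fun k => u (c k))
  have hBpq : B p q = ((a k₀ : ℝ) : T) := by rw [← hk0, ← hk1]; exact ha k₀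
  rw [← hk0, ← hk1] at *
  rw [hBpq, ← WithBot.coe_add, WithBot.coe_eq_coe]
  exact heq k₀ (Finset.mem_univ k₀)

lemma rho_le_zero_T {n : ℕ} (P : Fin n → Fin n → T) (u : Fin n → ℝ)
    (hle : ∀ i j, P i j + ((u j : ℝ) : T) ≤ ((u i : ℝ) : T)) :
    ∀ ℓ, ∀ c : Fin (ℓ + 1) → Fin n, cwt P c ≤ ((((ℓ : ℝ) + 1) * 0 : ℝ) : T) := by
  intro ℓ c
  by_cases hnb : ∀ k : Fin (ℓ + 1), P (c k) (c (k + 1)) ≠ ⊥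
  · obtain ⟨a, ha⟩ := lift_reals_T hnb
    have hpt : ∀ k : Fin (ℓ + 1), a k + u (c (k + 1)) ≤ u (c k) := by
      intro k
      have := hle (c k) (c (k + 1))
      rw [ha k] at this
      exact_mod_cast this
    have hP : cwt P c = ((∑ k, a k : ℝ) : T) := by
      rw [show cwt P c = ∑ k : Fin (ℓ + 1), P (c k) (c (k + 1)) from rfl]
      simp only [ha]
      exact coe_sum_T a
    rw [hP, WithBot.coe_le_coe]
    have h1 : ∑ k, (a k + u (c (k + 1))) ≤ ∑ k, u (c k) :=
      Finset.sum_le_sum (fun k _ => hpt k)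
    rw [Finset.sum_add_distrib, tele_T (fun k => u (c k))] at h1
    rw [mul_zero]
    linarith
  · push_neg at hnb
    obtain ⟨k, hk⟩ := hnb
    have hb : cwt P c = ⊥ := sum_eq_bot_T k hk
    rw [hb]
    exact bot_le

lemma exists_zero_circuit_T {n : ℕ} (P : Fin n → Fin n → T) (u : Fin n → ℝ) (i₀ : Fin n)
    (hg : ∀ i, ∃ j, P i j + ((u j : ℝ) : T) = ((u i : ℝ) : T)) :
    ∃ ℓ, ∃ c : Fin (ℓ + 1) → Fin n, cwt P c = ((((ℓ : ℝ) + 1) * 0 : ℝ) : T) := by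
  choose g hgs using hg
  have hcard : Fintype.card (Fin n) < Fintype.card (Fin (n + 1)) := by simp
  obtain ⟨k₁, k₂, hne, heq⟩ :=
    Fintype.exists_ne_map_eq_of_card_lt (fun k : Fin (n + 1) => g^[k.val] i₀) hcard
  wlog hlt : k₁ < k₂ generalizing k₁ k₂
  · exact this k₂ k₁ hne.symm heq.symm ((hne.lt_or_gt).resolve_left hlt)
  obtain ⟨ℓ, hd⟩ : ∃ ℓ, k₂.val - k₁.val = ℓ + 1 :=
    ⟨k₂.val - k₁.val - 1, (Nat.succ_pred_eq_of_pos (Nat.sub_pos_of_lt hlt)).symm⟩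
  set x := g^[k₁.val] i₀ with hx
  have hcyc : g^[ℓ + 1] x = x := by
    rw [hx, ← Function.iterate_add_apply, ← hd, Nat.sub_add_cancel hlt.le]
    exact heq.symm
  have hstep : ∀ k : Fin (ℓ + 1), g^[((k + 1 : Fin (ℓ + 1))).val] x = g (g^[k.val] x) := by
    intro k
    by_cases hk : k.val < ℓ
    · rw [Fin.val_add_one_of_lt (Fin.lt_def.mpr (by simpa using hk))]
      exact Function.iterate_succ_apply' g k.val x
    · have hkl : k = Fin.last ℓ := by
        apply Fin.ext
        have := k.isLt
        simp only [Fin.val_last]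
        omega
      subst hkl
      rw [Fin.last_add_one]
      simp only [Fin.val_zero, Function.iterate_zero, id_eq, Fin.val_last]
      rw [← Function.iterate_succ_apply' g ℓ x]
      exact hcyc.symm
  have hentry : ∀ k : Fin (ℓ + 1),
      P (g^[k.val] x) (g^[((k + 1 : Fin (ℓ + 1))).val] x)
        = ((u (g^[k.val] x) - u (g^[((k + 1 : Fin (ℓ + 1))).val] x) : ℝ) : T) := by
    intro k
    rw [hstep k]
    exact solveT (hgs _)
  refine ⟨ℓ, fun k => g^[k.val] x, ?_⟩
  have hcw : cwt P (fun k : Fin (ℓ + 1) => g^[k.val] x)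
      = ((∑ k : Fin (ℓ + 1),
          (u (g^[k.val] x) - u (g^[((k + 1 : Fin (ℓ + 1))).val] x)) : ℝ) : T) := by
    rw [show cwt P (fun k : Fin (ℓ + 1) => g^[k.val] x)
        = ∑ k : Fin (ℓ + 1), P (g^[k.val] x) (g^[((k + 1 : Fin (ℓ + 1))).val] x) from rfl]
    simp only [hentry]
    exact coe_sum_T _
  rw [hcw, WithBot.coe_eq_coe, Finset.sum_sub_distrib, mul_zero]
  have ht := tele_T (fun k : Fin (ℓ + 1) => u (g^[k.val] x))
  simp only [sub_eq_zero]
  exact ht.symm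

/-- Let `M` be the entrywise max of the generators (each with `ρ = 0` and
ultimate rank `n`), with `ρ(M) = 0`, and let `u` be a finite visualization of `M`
(`M ⊙ u ≤ u`). Then `u` is a common eigenvector of all generators, and every product `P`
of generators satisfies `P ⊙ u = u` and `ρ(P) = 0`. -/
theorem stmt18 {n m : ℕ} (A : Fin m → (Fin n → Fin n → T))
    (hrho : ∀ t, RhoEq (A t) 0)
    (hurk : ∀ t, ∃ τ : Equiv.Perm (Fin n), ∀ i j, CritArc (A t) 0 i j ↔ j = τ i)
    (M : Fin n → Fin n → T) (hM : ∀ i j, M i j = Finset.univ.sup fun t => A t i j)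
    (hrhoM : RhoEq M 0)
    (u : Fin n → ℝ)
    (hvis : ∀ i, tmulVec M (fun j => ((u j : ℝ) : T)) i ≤ ((u i : ℝ) : T)) :
    (∀ t, ∀ i, tmulVec (A t) (fun j => ((u j : ℝ) : T)) i = ((u i : ℝ) : T)) ∧
    (∀ L : List (Fin m), L ≠ [] →
      (∀ i, tmulVec (tProd (L.map A)) (fun j => ((u j : ℝ) : T)) i = ((u i : ℝ) : T)) ∧
      RhoEq (tProd (L.map A)) 0) := by
  have n_pos : (Finset.univ : Finset (Fin n)).Nonempty := by
    obtain ⟨ℓ, c, _⟩ := hrhoM.1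
    exact ⟨c 0, Finset.mem_univ _⟩
  obtain ⟨i₀, _⟩ := n_pos
  have hMle : ∀ i j, M i j + ((u j : ℝ) : T) ≤ ((u i : ℝ) : T) := by
    intro i j
    refine le_trans ?_ (hvis i)
    show _ ≤ Finset.univ.sup fun j => M i j + ((u j : ℝ) : T)
    exact Finset.le_sup (f := fun j => M i j + ((u j : ℝ) : T)) (Finset.mem_univ j)
  have hAle : ∀ t i j, A t i j + ((u j : ℝ) : T) ≤ ((u i : ℝ) : T) := by
    intro t i j
    refine le_trans (add_le_add_left ?_ _) (hMle i j)
    rw [hM i j]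
    exact Finset.le_sup (f := fun t => A t i j) (Finset.mem_univ t)
  choose τ hτ using hurk
  have hAeq : ∀ t i, A t i (τ t i) + ((u (τ t i) : ℝ) : T) = ((u i : ℝ) : T) := by
    intro t i
    exact arc_eq_T (A t) u (hAle t) ((hτ t i (τ t i)).mpr rfl)
  have part1 : ∀ t i, tmulVec (A t) (fun j => ((u j : ℝ) : T)) i = ((u i : ℝ) : T) := by
    intro t i
    show (Finset.univ.sup fun j => A t i j + ((u j : ℝ) : T)) = ((u i : ℝ) : T)
    apply le_antisymm
    · exact Finset.sup_le (fun j _ => hAle t i j)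
    · calc ((u i : ℝ) : T) = A t i (τ t i) + ((u (τ t i) : ℝ) : T) := (hAeq t i).symm
        _ ≤ _ := Finset.le_sup (f := fun j => A t i j + ((u j : ℝ) : T))
            (Finset.mem_univ (τ t i))
  have key : ∀ L : List (Fin m),
      (∀ i j, tProd (L.map A) i j + ((u j : ℝ) : T) ≤ ((u i : ℝ) : T)) ∧
      (∀ i, ∃ j, tProd (L.map A) i j + ((u j : ℝ) : T) = ((u i : ℝ) : T)) := by
    intro L
    induction L with
    | nil =>
      constructor
      · intro i j
        simp only [List.map_nil, tProd, tId]
        by_cases h : i = j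
        · subst h; simp
        · simp [h]
      · intro i
        exact ⟨i, by simp [List.map_nil, tProd, tId]⟩
    | cons t L ih =>
      have hstep1 : ∀ i j, tProd ((t :: L).map A) i j + ((u j : ℝ) : T) ≤ ((u i : ℝ) : T) := by
        intro i j
        have hne : (Finset.univ : Finset (Fin n)).Nonempty := ⟨i, Finset.mem_univ i⟩
        simp only [List.map_cons, tProd, tmul]
        obtain ⟨l, _, hl⟩ := Finset.exists_mem_eq_sup Finset.univ hne
          (fun l => A t i l + tProd (L.map A) l j)
        rw [hl, add_assoc]
        calc A t i l + (tProd (L.map A) l j + ((u j : ℝ) : T))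
            ≤ A t i l + ((u l : ℝ) : T) := add_le_add_right (ih.1 l j) _
          _ ≤ _ := hAle t i l
      refine ⟨hstep1, ?_⟩
      intro i
      obtain ⟨j, hj⟩ := ih.2 (τ t i)
      refine ⟨j, le_antisymm (hstep1 i j) ?_⟩
      calc ((u i : ℝ) : T) = A t i (τ t i) + ((u (τ t i) : ℝ) : T) := (hAeq t i).symm
        _ = A t i (τ t i) + (tProd (L.map A) (τ t i) j + ((u j : ℝ) : T)) := by rw [hj]
        _ = (A t i (τ t i) + tProd (L.map A) (τ t i) j) + ((u j : ℝ) : T) :=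
            (add_assoc _ _ _).symm
        _ ≤ tProd ((t :: L).map A) i j + ((u j : ℝ) : T) := by
            apply add_le_add_left
            simp only [List.map_cons, tProd, tmul]
            exact Finset.le_sup (f := fun l => A t i l + tProd (L.map A) l j)
              (Finset.mem_univ (τ t i))
  refine ⟨part1, ?_⟩
  intro L _
  obtain ⟨hle, hex⟩ := key L
  constructor
  · intro i
    show (Finset.univ.sup fun j => tProd (L.map A) i j + ((u j : ℝ) : T)) = ((u i : ℝ) : T)
    apply le_antisymm (Finset.sup_le fun j _ => hle i j)
    obtain ⟨j, hj⟩ := hex i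
    calc ((u i : ℝ) : T) = _ := hj.symm
      _ ≤ _ := Finset.le_sup (f := fun j => tProd (L.map A) i j + ((u j : ℝ) : T))
          (Finset.mem_univ j)
  · exact ⟨exists_zero_circuit_T _ u i₀ hex, rho_le_zero_T _ u hle⟩
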